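/- Set c² = 2. Define g(μ) = 2^{⌊μ/2⌋}(2⌊(μ−1)/2⌋+1)!!/⌊(μ−1)/2⌋! for integers μ ≥ 1 and g(0) = 1; define C̃_{0,3}(a, b, d) = (1/2)(1 + (−1)^{a+b+d}) g(a)g(b)g(d) for integers a, b, d ≥ 0; define C_{1,1}(m) = 2^{(m−4)/2}(m−1)!!/(3·((m−4)/2)!) for even integers m ≥ 4 and C_{1,1}(m) = 0 otherwise. For an integer m ≥ 1 define G(m) = −(2/3!)·( Σ_{i+j+k=m, i,j,k ≥ 1} C̃_{0,3}(i,j,k)/(ijk) + (3/2)·Σ_{i+j=m, i,j ≥ 1} C̃_{0,3}(i,j,0)/(ij) + (3/(4m))·C̃_{0,3}(0,0,m) ) − 2·C_{1,1}(m)/m. Then for all real x > √2, (x³ − 12x)/(48(x² − 2)^{3/2}) = 1/48 + (1/2)·Σ_{k=1}^{∞} G(2k)·(2x²)^{−k}, the series on the right converging for x > √2. -/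

import Mathlib

/-- The compositions of `m` into `n` strictly positive parts, as a finset of
ordered `n`-tuples. -/
def comps (n m : ℕ) : Finset (Fin n → ℕ) :=
  (Finset.Nat.antidiagonalTuple n m).filter fun μ => ∀ i, 1 ≤ μ i

/-- The double factorial. -/
def dfact : ℕ → ℕ
  | 0 => 1
  | 1 => 1
  | n + 2 => (n + 2) * dfact n

/-- `g(μ) = 2^⌊μ/2⌋ (2⌊(μ-1)/2⌋+1)!! / ⌊(μ-1)/2⌋!` for `μ ≥ 1`, and `g(0) = 1`. -/
noncomputable def gfun (μ : ℕ) : ℝ :=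
  if μ = 0 then 1
  else 2 ^ (μ / 2) * dfact (2 * ((μ - 1) / 2) + 1) / Nat.factorial ((μ - 1) / 2)

/-- `C̃_{0,3}(a,b,d) = (1/2)(1 + (-1)^{a+b+d}) g(a) g(b) g(d)`, the closed-form
genus-0 three-vertex count extended to allow zero arguments. -/
noncomputable def C03t (a b d : ℕ) : ℝ :=
  (1 / 2) * (1 + (-1 : ℝ) ^ (a + b + d)) * gfun a * gfun b * gfun d

/-- `C_{1,1}(m) = 2^{(m-4)/2} (m-1)!! / (3 ((m-4)/2)!)` for even `m ≥ 4`, and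
`0` otherwise. -/
noncomputable def C11 (m : ℕ) : ℝ :=
  if 4 ≤ m ∧ Even m then
    2 ^ ((m - 4) / 2) * dfact (m - 1) / (3 * Nat.factorial ((m - 4) / 2))
  else 0

/-- The coefficient `G(m)` built from `C̃_{0,3}` and `C_{1,1}`. -/
noncomputable def Gc (m : ℕ) : ℝ :=
  -(2 / (Nat.factorial 3 : ℝ)) *
    ((∑ μ ∈ comps 3 m, C03t (μ 0) (μ 1) (μ 2) / ((μ 0 : ℝ) * (μ 1) * (μ 2)))
      + (3 / 2) * (∑ μ ∈ comps 2 m, C03t (μ 0) (μ 1) 0 / ((μ 0 : ℝ) * (μ 1)))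
      + (3 / (4 * (m : ℝ))) * C03t 0 0 m)
  - 2 * C11 m / (m : ℝ)

/-! ### Auxiliary development -/

noncomputable def cB (n : ℕ) : ℝ := Nat.centralBinom n

lemma cB_zero : cB 0 = 1 := by simp [cB, Nat.centralBinom]

lemma cB_pos (n : ℕ) : 0 < cB n := by
  unfold cB; exact_mod_cast Nat.centralBinom_pos n

lemma cB_rec (n : ℕ) : ((n:ℝ)+1) * cB (n+1) = 2*(2*n+1) * cB n := by
  have := Nat.succ_mul_centralBinom_succ n
  unfold cB
  exact_mod_cast this

lemma cB_le (n : ℕ) : cB n ≤ 4^n := by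
  induction n with
  | zero => simp [cB_zero]
  | succ n ih =>
      have h := cB_rec n
      have h2 : cB (n+1) ≤ 4 * cB n := by nlinarith [cB_pos n, cB_pos (n+1)]
      calc cB (n+1) ≤ 4 * cB n := h2
        _ ≤ 4 * 4^n := by nlinarith [cB_pos n]
        _ = 4^(n+1) := by ring

lemma L1 : ∀ p : ℕ, 2^p * dfact (2*p+1) * p.factorial = (2*p+1).factorial := by
  intro p
  induction p with
  | zero => rfl
  | succ n ih =>
      have h1 : 2*(n+1)+1 = (2*n+1) + 2 := by ring
      rw [h1, dfact]
      have h2 : (2*n+1+2) = 2*n+3 := by ring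
      have h3 : (2*n+3).factorial = (2*n+3) * ((2*n+2) * (2*n+1).factorial) := by
        have e : 2*n+3 = (2*n+2) + 1 := by ring
        rw [e, Nat.factorial_succ]
        have e2 : 2*n+2 = (2*n+1) + 1 := by ring
        rw [e2, Nat.factorial_succ]
      rw [h2, h3, ← ih, Nat.factorial_succ]
      ring

lemma Rdf (p : ℕ) : (dfact (2*p+1) : ℝ) = ((2*p+1).factorial : ℝ) / (2^p * p.factorial) := by
  rw [eq_div_iff (by positivity)]
  have := L1 p
  push_cast [← this]
  ring

lemma RcB (p : ℕ) : cB p = ((2*p).factorial : ℝ) / (p.factorial * p.factorial) := by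
  rw [eq_div_iff (by positivity)]
  have := Nat.choose_mul_factorial_mul_factorial (show p ≤ 2*p by omega)
  have h2 : 2*p - p = p := by omega
  rw [h2] at this
  unfold cB Nat.centralBinom
  push_cast [← this]
  ring

lemma gfun_zero : gfun 0 = 1 := by simp [gfun]

lemma gfun_odd (p : ℕ) : gfun (2*p+1) = (2*(p:ℝ)+1) * cB p := by
  have hne : 2*p+1 ≠ 0 := by omega
  rw [gfun, if_neg hne]
  have h1 : (2*p+1)/2 = p := by omega
  have h2 : (2*p+1-1)/2 = p := by omega
  rw [h1, h2, Rdf p, RcB p]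
  have h3 : ((2*p+1).factorial : ℝ) = (2*(p:ℝ)+1) * ((2*p).factorial : ℝ) := by
    rw [show 2*p+1 = (2*p)+1 from rfl, Nat.factorial_succ]
    push_cast; ring
  rw [h3]
  have hf : (p.factorial : ℝ) ≠ 0 := by positivity
  field_simp

lemma gfun_even (p : ℕ) : gfun (2*p+2) = ((p:ℝ)+1) * cB (p+1) := by
  have hne : 2*p+2 ≠ 0 := by omega
  rw [gfun, if_neg hne]
  have h1 : (2*p+2)/2 = p+1 := by omega
  have h2 : (2*p+2-1)/2 = p := by omega
  rw [h1, h2, Rdf p, RcB (p+1)]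
  have h3 : ((2*(p+1)).factorial : ℝ) = (2*(p:ℝ)+2) * ((2*p+1).factorial : ℝ) := by
    rw [show 2*(p+1) = (2*p+1)+1 from rfl, Nat.factorial_succ]
    push_cast; ring
  have h4 : ((p+1).factorial : ℝ) = ((p:ℝ)+1) * (p.factorial : ℝ) := by
    rw [Nat.factorial_succ]; push_cast; ring
  rw [h3, h4]
  have hf : (p.factorial : ℝ) ≠ 0 := by positivity
  have hfact : ((2*p+1).factorial : ℝ) ≠ 0 := by positivity
  field_simp
  ring

/-- `h μ = gfun μ / μ` (note `h 0 = 1/0 = 0`). -/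
noncomputable def hh (μ : ℕ) : ℝ := gfun μ / μ

lemma hh_zero : hh 0 = 0 := by simp [hh]

lemma hh_odd (p : ℕ) : hh (2*p+1) = cB p := by
  unfold hh
  rw [gfun_odd]
  have : ((2*p+1 : ℕ) : ℝ) = 2*(p:ℝ)+1 := by push_cast; ring
  rw [this]
  have hne : 2*(p:ℝ)+1 ≠ 0 := by positivity
  field_simp

lemma hh_even (p : ℕ) : hh (2*p+2) = cB (p+1) / 2 := by
  unfold hh
  rw [gfun_even]
  have : ((2*p+2 : ℕ) : ℝ) = 2*((p:ℝ)+1) := by push_cast; ring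
  rw [this]
  have hne : (p:ℝ)+1 ≠ 0 := by positivity
  field_simp

/-! ### Convolution identities -/

lemma refl_sum (n : ℕ) :
    ∑ i ∈ Finset.range (n+1), ((n:ℝ)-i) * cB i * cB (n-i)
      = ∑ i ∈ Finset.range (n+1), (i:ℝ) * cB i * cB (n-i) := by
  have := Finset.sum_range_reflect (fun i => ((n:ℝ)-i) * cB i * cB (n-i)) (n+1)
  rw [← this]
  apply Finset.sum_congr rfl
  intro i hi
  simp only [Finset.mem_range] at hi
  have h1 : n + 1 - 1 - i = n - i := by omega
  have h2 : n - (n - i) = i := by omega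
  rw [h1, h2]
  have h3 : (n:ℝ) - (n - i : ℕ) = i := by
    have : ((n - i : ℕ) : ℝ) = (n:ℝ) - i := by
      push_cast [Nat.cast_sub (by omega : i ≤ n)]; ring
    rw [this]; ring
  rw [h3]; ring

lemma weight_sum (n : ℕ) :
    2 * ∑ i ∈ Finset.range (n+1), (i:ℝ) * cB i * cB (n-i)
      = n * ∑ i ∈ Finset.range (n+1), cB i * cB (n-i) := by
  have h := refl_sum n
  have e : ∑ i ∈ Finset.range (n+1), ((i:ℝ) * cB i * cB (n-i) + ((n:ℝ)-i) * cB i * cB (n-i))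
      = ∑ i ∈ Finset.range (n+1), (n:ℝ) * (cB i * cB (n-i)) := by
    apply Finset.sum_congr rfl; intro i _; ring
  rw [Finset.sum_add_distrib, h, ← Finset.mul_sum] at e
  linarith

lemma idA : ∀ n : ℕ, ∑ i ∈ Finset.range (n+1), cB i * cB (n-i) = 4^n := by
  intro n
  induction n with
  | zero => simp [cB_zero]
  | succ n ih =>
      have key : ((n:ℝ)+1) * ∑ i ∈ Finset.range (n+2), cB i * cB (n+1-i)
          = 4 * ((n:ℝ)+1) * ∑ i ∈ Finset.range (n+1), cB i * cB (n-i) := by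
        have e1 : ((n:ℝ)+1) * ∑ i ∈ Finset.range (n+2), cB i * cB (n+1-i)
            = ∑ i ∈ Finset.range (n+2), ((i:ℝ) * cB i * cB (n+1-i)
                + ((n+1:ℝ)-i) * cB i * cB (n+1-i)) := by
          rw [Finset.mul_sum]
          apply Finset.sum_congr rfl; intro i _; ring
        rw [Finset.sum_add_distrib] at e1
        have e2 := refl_sum (n+1)
        push_cast at e2
        rw [e2] at e1
        have e3 : ∑ i ∈ Finset.range (n+2), (i:ℝ) * cB i * cB (n+1-i)
            = ∑ i ∈ Finset.range (n+1), ((i:ℝ)+1) * cB (i+1) * cB (n-i) := by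
          rw [Finset.sum_range_succ' (fun i => (i:ℝ) * cB i * cB (n+1-i)) (n+1)]
          simp only [Nat.cast_zero, zero_mul, mul_zero, add_zero]
          apply Finset.sum_congr rfl
          intro i hi
          simp only [Finset.mem_range] at hi
          have : n + 1 - (i+1) = n - i := by omega
          rw [this]; push_cast; ring
        have e4 : ∑ i ∈ Finset.range (n+1), ((i:ℝ)+1) * cB (i+1) * cB (n-i)
            = ∑ i ∈ Finset.range (n+1), 2*(2*(i:ℝ)+1) * cB i * cB (n-i) := by
          apply Finset.sum_congr rfl
          intro i _
          rw [show ((i:ℝ)+1) * cB (i+1) * cB (n-i) = (((i:ℝ)+1) * cB (i+1)) * cB (n-i) by ring,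
            cB_rec i]
        have e5 : ∑ i ∈ Finset.range (n+1), 2*(2*(i:ℝ)+1) * cB i * cB (n-i)
            = 4 * ∑ i ∈ Finset.range (n+1), (i:ℝ) * cB i * cB (n-i)
              + 2 * ∑ i ∈ Finset.range (n+1), cB i * cB (n-i) := by
          rw [Finset.mul_sum, Finset.mul_sum, ← Finset.sum_add_distrib]
          apply Finset.sum_congr rfl; intro i _; ring
        have e6 := weight_sum n
        rw [e3, e4, e5] at e1
        rw [e1]
        nlinarith [e6]
      have hn : ((n:ℝ)+1) ≠ 0 := by positivity
      have key2 : ((n:ℝ)+1) * ∑ i ∈ Finset.range (n+2), cB i * cB (n+1-i)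
          = ((n:ℝ)+1) * 4^(n+1) := by rw [key, ih]; ring
      exact mul_left_cancel₀ hn key2

lemma idB : ∀ n : ℕ, ∑ i ∈ Finset.range (n+1), cB i * 4^(n-i) = (2*(n:ℝ)+1) * cB n := by
  intro n
  induction n with
  | zero => simp [cB_zero]
  | succ n ih =>
      rw [Finset.sum_range_succ]
      have h1 : ∀ i ∈ Finset.range (n+1), cB i * 4^(n+1-i) = 4 * (cB i * 4^(n-i)) := by
        intro i hi
        have : n+1-i = (n-i)+1 := by simp at hi; omega
        rw [this, pow_succ]; ring
      rw [Finset.sum_congr rfl h1, ← Finset.mul_sum, ih]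
      have hrec := cB_rec n
      have : n+1-(n+1) = 0 := by omega
      rw [this]
      push_cast
      nlinarith [hrec]

lemma peelA1 (n : ℕ) : ∑ i ∈ Finset.range n, cB (i+1) * cB (n-(i+1)) = 4^n - cB n := by
  have := idA n
  rw [Finset.sum_range_succ' (fun i => cB i * cB (n-i)) n] at this
  simp only [Nat.sub_zero, cB_zero, one_mul] at this
  linarith

lemma peelA2 (n : ℕ) : ∑ i ∈ Finset.range n, cB i * cB (n-i) = 4^n - cB n := by
  have := idA n
  rw [Finset.sum_range_succ] at this
  simp only [Nat.sub_self, cB_zero, mul_one] at this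
  linarith

lemma peelA3 (n : ℕ) : ∑ i ∈ Finset.range n, cB (i+1) * cB (n-i) = 4^(n+1) - 2*cB (n+1) := by
  have h := idA (n+1)
  rw [Finset.sum_range_succ' (fun i => cB i * cB (n+1-i)) (n+1)] at h
  simp only [Nat.sub_zero, cB_zero, one_mul] at h
  have e : ∀ i ∈ Finset.range (n+1), cB (i+1) * cB (n+1-(i+1)) = cB (i+1) * cB (n-i) := by
    intro i hi
    have : n+1-(i+1) = n-i := by omega
    rw [this]
  rw [Finset.sum_congr rfl e, Finset.sum_range_succ] at h
  have e2 : n - n = 0 := by omega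
  rw [e2, cB_zero, mul_one] at h
  linarith

lemma peelB (n : ℕ) : ∑ i ∈ Finset.range n, cB (i+1) * 4^(n-(i+1)) = (2*(n:ℝ)+1) * cB n - 4^n := by
  have := idB n
  rw [Finset.sum_range_succ' (fun i => cB i * 4^(n-i)) n] at this
  simp only [Nat.sub_zero, cB_zero, one_mul] at this
  linarith

/-! ### Even/odd splitting and the `V` sums -/

lemma sum_range_even_odd (f : ℕ → ℝ) (n : ℕ) :
    ∑ i ∈ Finset.range (2*n), f i
      = ∑ j ∈ Finset.range n, f (2*j) + ∑ j ∈ Finset.range n, f (2*j+1) := by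
  induction n with
  | zero => simp
  | succ n ih =>
      have e : 2*(n+1) = (2*n+1)+1 := by ring
      rw [e, Finset.sum_range_succ, Finset.sum_range_succ,
        Finset.sum_range_succ (fun j => f (2*j)) n, Finset.sum_range_succ (fun j => f (2*j+1)) n,
        ih]
      ring

noncomputable def Vs (s : ℕ) : ℝ := ∑ j ∈ Finset.range (s+1), hh j * hh (s - j)

lemma Vs_zero : Vs 0 = 0 := by simp [Vs, hh_zero]

lemma Vs_odd (n : ℕ) : Vs (2*n+1) = 4^n - cB n := by
  unfold Vs
  rw [show 2*n+1+1 = 2*(n+1) by ring, sum_range_even_odd]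
  have heven : ∑ j ∈ Finset.range (n+1), hh (2*j) * hh (2*n+1 - 2*j)
      = (4^n - cB n)/2 := by
    have e : ∀ j ∈ Finset.range (n+1), hh (2*j) * hh (2*n+1 - 2*j)
        = hh (2*j) * cB (n-j) := by
      intro j hj
      simp only [Finset.mem_range] at hj
      have : 2*n+1-2*j = 2*(n-j)+1 := by omega
      rw [this, hh_odd]
    rw [Finset.sum_congr rfl e,
      Finset.sum_range_succ' (fun j => hh (2*j) * cB (n-j)) n]
    simp only [Nat.mul_zero, hh_zero, zero_mul, add_zero]
    have e2 : ∀ j ∈ Finset.range n, hh (2*(j+1)) * cB (n-(j+1))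
        = cB (j+1) * cB (n-(j+1)) / 2 := by
      intro j _
      rw [show 2*(j+1) = 2*j+2 by ring, hh_even]
      ring
    rw [Finset.sum_congr rfl e2, ← Finset.sum_div, peelA1]
  have hodd : ∑ j ∈ Finset.range (n+1), hh (2*j+1) * hh (2*n+1 - (2*j+1))
      = (4^n - cB n)/2 := by
    have e : ∀ j ∈ Finset.range (n+1), hh (2*j+1) * hh (2*n+1 - (2*j+1))
        = cB j * hh (2*(n-j)) := by
      intro j hj
      simp only [Finset.mem_range] at hj
      have : 2*n+1-(2*j+1) = 2*(n-j) := by omega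
      rw [this, hh_odd]
    rw [Finset.sum_congr rfl e, Finset.sum_range_succ]
    have e2 : n - n = 0 := by omega
    rw [e2]
    simp only [Nat.mul_zero, hh_zero, mul_zero, add_zero]
    have e3 : ∀ j ∈ Finset.range n, cB j * hh (2*(n-j)) = cB j * cB (n-j) / 2 := by
      intro j hj
      simp only [Finset.mem_range] at hj
      have : 2*(n-j) = 2*(n-j-1)+2 := by omega
      rw [this, hh_even]
      have : n-j-1+1 = n-j := by omega
      rw [this]
      ring
    rw [Finset.sum_congr rfl e3, ← Finset.sum_div, peelA2]
  rw [heven, hodd]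
  ring

lemma Vs_even (n : ℕ) : Vs (2*n+2) = 2*4^n - cB (n+1)/2 := by
  unfold Vs
  rw [Finset.sum_range_succ]
  have e0 : 2*n+2-(2*n+2) = 0 := by omega
  rw [e0, hh_zero, mul_zero, add_zero, show 2*n+2 = 2*(n+1) by ring, sum_range_even_odd]
  have heven : ∑ j ∈ Finset.range (n+1), hh (2*j) * hh (2*(n+1) - 2*j)
      = 4^n - cB (n+1)/2 := by
    rw [Finset.sum_range_succ' (fun j => hh (2*j) * hh (2*(n+1) - 2*j)) n]
    simp only [Nat.mul_zero, hh_zero, zero_mul, add_zero]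
    have e : ∀ j ∈ Finset.range n, hh (2*(j+1)) * hh (2*(n+1) - 2*(j+1))
        = cB (j+1) * cB (n-j) / 4 := by
      intro j hj
      simp only [Finset.mem_range] at hj
      have e1 : 2*(j+1) = 2*j+2 := by ring
      have e2 : 2*(n+1)-(2*j+2) = 2*(n-j-1)+2 := by omega
      rw [e1, e2, hh_even, hh_even]
      have : n-j-1+1 = n-j := by omega
      rw [this]
      ring
    rw [Finset.sum_congr rfl e, ← Finset.sum_div, peelA3]
    ring
  have hodd : ∑ j ∈ Finset.range (n+1), hh (2*j+1) * hh (2*(n+1) - (2*j+1))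
      = 4^n := by
    have e : ∀ j ∈ Finset.range (n+1), hh (2*j+1) * hh (2*(n+1) - (2*j+1))
        = cB j * cB (n-j) := by
      intro j hj
      simp only [Finset.mem_range] at hj
      have : 2*(n+1)-(2*j+1) = 2*(n-j)+1 := by omega
      rw [this, hh_odd, hh_odd]
    rw [Finset.sum_congr rfl e, idA]
  rw [heven, hodd]
  ring

lemma S3sum (k : ℕ) :
    ∑ i ∈ Finset.range (2*k+3), hh i * Vs (2*k+2-i)
      = 2*(2*(k:ℝ)+1)*cB k - 3*4^k + cB (k+1)/2 := by
  rw [Finset.sum_range_succ]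
  have e0 : 2*k+2-(2*k+2) = 0 := by omega
  rw [e0, Vs_zero, mul_zero, add_zero, show 2*k+2 = 2*(k+1) by ring, sum_range_even_odd]
  have heven : ∑ j ∈ Finset.range (k+1), hh (2*j) * Vs (2*(k+1) - 2*j)
      = (2*(k:ℝ)+1)*cB k - 2*4^k + cB (k+1)/2 := by
    rw [Finset.sum_range_succ' (fun j => hh (2*j) * Vs (2*(k+1) - 2*j)) k]
    simp only [Nat.mul_zero, hh_zero, zero_mul, add_zero]
    have e : ∀ j ∈ Finset.range k, hh (2*(j+1)) * Vs (2*(k+1) - 2*(j+1))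
        = cB (j+1) * 4^(k-(j+1)) - cB (j+1) * cB (k-j) / 4 := by
      intro j hj
      simp only [Finset.mem_range] at hj
      have e1 : 2*(j+1) = 2*j+2 := by ring
      have e2 : 2*(k+1)-(2*j+2) = 2*(k-j-1)+2 := by omega
      rw [e1, e2, hh_even, Vs_even]
      have e3 : k-j-1+1 = k-j := by omega
      have e4 : k-j-1 = k-(j+1) := by omega
      rw [e3, e4]
      ring
    rw [Finset.sum_congr rfl e, Finset.sum_sub_distrib, peelB]
    have : ∑ j ∈ Finset.range k, cB (j+1) * cB (k-j) / 4
        = (4^(k+1) - 2*cB (k+1))/4 := by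
      rw [← Finset.sum_div, peelA3]
    rw [this]
    ring
  have hodd : ∑ j ∈ Finset.range (k+1), hh (2*j+1) * Vs (2*(k+1) - (2*j+1))
      = (2*(k:ℝ)+1)*cB k - 4^k := by
    have e : ∀ j ∈ Finset.range (k+1), hh (2*j+1) * Vs (2*(k+1) - (2*j+1))
        = cB j * 4^(k-j) - cB j * cB (k-j) := by
      intro j hj
      simp only [Finset.mem_range] at hj
      have : 2*(k+1)-(2*j+1) = 2*(k-j)+1 := by omega
      rw [this, hh_odd, Vs_odd]
      ring
    rw [Finset.sum_congr rfl e, Finset.sum_sub_distrib, idA, idB]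
  rw [heven, hodd]
  ring


/-! ### new stuff -/

lemma comps_sum_eq {n m : ℕ} (f : (Fin n → ℕ) → ℝ) (hf : ∀ μ, (∃ i, μ i = 0) → f μ = 0) :
    ∑ μ ∈ comps n m, f μ = ∑ μ ∈ Finset.Nat.antidiagonalTuple n m, f μ := by
  unfold comps
  apply Finset.sum_filter_of_ne
  intro μ _ hfμ i
  by_contra h
  exact hfμ (hf μ ⟨i, by omega⟩)

lemma term2 {i j : ℕ} (hpar : Even (i + j)) :
    C03t i j 0 / ((i:ℝ) * j) = hh i * hh j := by
  unfold C03t hh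
  have h1 : (-1:ℝ)^(i+j+0) = 1 := by
    rw [add_zero]; exact hpar.neg_one_pow
  rw [h1, gfun_zero]
  rw [mul_div_mul_comm]
  ring

lemma term3 {i j l : ℕ} (hpar : Even (i + j + l)) :
    C03t i j l / ((i:ℝ) * j * l) = hh i * hh j * hh l := by
  unfold C03t hh
  rw [hpar.neg_one_pow]
  rw [mul_div_mul_comm, mul_div_mul_comm]
  ring

lemma sum2_red (m : ℕ) :
    ∑ μ ∈ Finset.Nat.antidiagonalTuple 2 m, C03t (μ 0) (μ 1) 0 / ((μ 0 : ℝ) * (μ 1))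
      = ∑ i ∈ Finset.range (m+1), C03t i (m-i) 0 / ((i:ℝ) * ((m-i : ℕ) : ℝ)) := by
  rw [Finset.Nat.antidiagonalTuple_two, Finset.sum_map,
    Finset.Nat.sum_antidiagonal_eq_sum_range_succ_mk]
  apply Finset.sum_congr rfl
  intro i _
  simp

lemma adt3_sum (m : ℕ) (f : ℕ → ℕ → ℕ → ℝ) :
    ∑ μ ∈ Finset.Nat.antidiagonalTuple 3 m, f (μ 0) (μ 1) (μ 2)
      = ∑ i ∈ Finset.range (m+1), ∑ j ∈ Finset.range (m-i+1), f i j (m-i-j) := by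
  rw [← Finset.sum_sigma (Finset.range (m+1)) (fun i => Finset.range (m-i+1))
    (fun p => f p.1 p.2 (m - p.1 - p.2))]
  apply Finset.sum_nbij' (i := fun μ => (⟨μ 0, μ 1⟩ : Σ _ : ℕ, ℕ))
    (j := fun p => ![p.1, p.2, m - p.1 - p.2])
  · intro μ hμ
    rw [Finset.Nat.mem_antidiagonalTuple] at hμ
    rw [Fin.sum_univ_three] at hμ
    simp only [Finset.mem_sigma, Finset.mem_range]
    omega
  · intro p hp
    simp only [Finset.mem_sigma, Finset.mem_range] at hp
    rw [Finset.Nat.mem_antidiagonalTuple, Fin.sum_univ_three]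
    simp only [Matrix.cons_val_zero, Matrix.cons_val_one, Matrix.head_cons,
      Matrix.cons_val_two, Matrix.tail_cons]
    omega
  · intro μ hμ
    rw [Finset.Nat.mem_antidiagonalTuple, Fin.sum_univ_three] at hμ
    funext i
    fin_cases i <;> simp <;> omega
  · intro p hp
    simp
  · intro μ hμ
    rw [Finset.Nat.mem_antidiagonalTuple, Fin.sum_univ_three] at hμ
    have : m - μ 0 - μ 1 = μ 2 := by omega
    rw [this]

lemma Vs_def' (s : ℕ) : ∑ j ∈ Finset.range (s+1), hh j * hh (s - j) = Vs s := rfl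

lemma sum2_eq (k : ℕ) :
    ∑ μ ∈ comps 2 (2*k+2), C03t (μ 0) (μ 1) 0 / ((μ 0 : ℝ) * (μ 1))
      = 2*4^k - cB (k+1)/2 := by
  rw [comps_sum_eq]
  · rw [sum2_red]
    have e : ∀ i ∈ Finset.range (2*k+2+1),
        C03t i (2*k+2-i) 0 / ((i:ℝ) * ((2*k+2-i : ℕ) : ℝ))
          = hh i * hh (2*k+2-i) := by
      intro i hi
      simp only [Finset.mem_range] at hi
      exact term2 ⟨k+1, by omega⟩
    rw [Finset.sum_congr rfl e, Vs_def', Vs_even]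
  · intro μ hμ
    rw [Fin.exists_fin_two] at hμ
    rcases hμ with h | h <;> rw [h] <;> simp

lemma sum3_eq (k : ℕ) :
    ∑ μ ∈ comps 3 (2*k+2), C03t (μ 0) (μ 1) (μ 2) / ((μ 0 : ℝ) * (μ 1) * (μ 2))
      = 2*(2*(k:ℝ)+1)*cB k - 3*4^k + cB (k+1)/2 := by
  rw [comps_sum_eq]
  · rw [adt3_sum (2*k+2) (fun i j l => C03t i j l / ((i:ℝ) * j * l))]
    have e : ∀ i ∈ Finset.range (2*k+2+1),
        (∑ j ∈ Finset.range (2*k+2-i+1), C03t i j (2*k+2-i-j) / ((i:ℝ) * j * ((2*k+2-i-j : ℕ):ℝ)))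
          = hh i * Vs (2*k+2-i) := by
      intro i hi
      simp only [Finset.mem_range] at hi
      have e2 : ∀ j ∈ Finset.range (2*k+2-i+1),
          C03t i j (2*k+2-i-j) / ((i:ℝ) * j * ((2*k+2-i-j : ℕ):ℝ))
            = hh i * (hh j * hh (2*k+2-i-j)) := by
        intro j hj
        simp only [Finset.mem_range] at hj
        rw [term3 ⟨k+1, by omega⟩]
        ring
      rw [Finset.sum_congr rfl e2, ← Finset.mul_sum, Vs_def']
    rw [Finset.sum_congr rfl e]
    have e3 : 2*k+2+1 = 2*k+3 := by omega
    rw [e3, S3sum]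
  · intro μ hμ
    obtain ⟨i, hi⟩ := hμ
    have : μ 0 = 0 ∨ μ 1 = 0 ∨ μ 2 = 0 := by
      rcases i with ⟨iv, hlt⟩
      interval_cases iv
      · exact Or.inl hi
      · exact Or.inr (Or.inl hi)
      · exact Or.inr (Or.inr hi)
    rcases this with h | h | h <;> rw [h] <;> simp

lemma C03t003 (k : ℕ) : C03t 0 0 (2*k+2) = ((k:ℝ)+1) * cB (k+1) := by
  unfold C03t
  rw [show (0+0+(2*k+2)) = 2*k+2 by omega]
  rw [Even.neg_one_pow ⟨k+1, by omega⟩, gfun_zero, gfun_even]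
  ring

lemma C11_eq (k : ℕ) : C11 (2*k+2) = (k:ℝ)*((k:ℝ)+1)*cB (k+1)/12 := by
  cases k with
  | zero =>
      unfold C11
      have hno : ¬(4 ≤ 2*0+2 ∧ Even (2*0+2)) := by rintro ⟨h4, _⟩; omega
      rw [if_neg hno]
      simp
  | succ j =>
      unfold C11
      rw [if_pos ⟨by omega, ⟨j+2, by ring⟩⟩]
      have e1 : (2*(j+1)+2-4)/2 = j := by omega
      have e2 : 2*(j+1)+2-1 = 2*j+3 := by omega
      rw [e1, e2, show 2*j+3 = 2*(j+1)+1 by ring, Rdf (j+1), show (j+1)+1 = j+2 by omega,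
        RcB (j+2)]
      have f1 : ((2*(j+2)).factorial : ℝ) = (2*(j:ℝ)+4) * ((2*(j+1)+1).factorial : ℝ) := by
        rw [show 2*(j+2) = (2*(j+1)+1)+1 by ring, Nat.factorial_succ]
        push_cast; ring
      have f2 : ((j+2).factorial : ℝ) = ((j:ℝ)+2) * ((j+1).factorial : ℝ) := by
        rw [show j+2 = (j+1)+1 by ring, Nat.factorial_succ]
        push_cast; ring
      have f3 : ((j+1).factorial : ℝ) = ((j:ℝ)+1) * (j.factorial : ℝ) := by
        rw [Nat.factorial_succ]; push_cast; ring
      rw [f1, f2, f3]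
      have h1 : (j.factorial : ℝ) ≠ 0 := by positivity
      have h2 : ((2*(j+1)+1).factorial : ℝ) ≠ 0 := by positivity
      have h3 : ((j:ℝ)+1) ≠ 0 := by positivity
      have h4 : ((j:ℝ)+2) ≠ 0 := by positivity
      push_cast
      field_simp
      ring

lemma Gc_eq (k : ℕ) :
    Gc (2*(k+1)) = (2*(k:ℝ)+3) * cB (k+1) / 24 - (2*(k:ℝ)+1) * cB k := by
  unfold Gc
  rw [show 2*(k+1) = 2*k+2 by ring]
  rw [sum3_eq, sum2_eq, C03t003, C11_eq]
  have hfac : (Nat.factorial 3 : ℝ) = 6 := by norm_num [Nat.factorial]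
  have hcast : ((2*k+2 : ℕ) : ℝ) = 2*(k:ℝ)+2 := by push_cast; ring
  rw [hfac, hcast]
  have h3 : (2*(k:ℝ)+2) ≠ 0 := by positivity
  have t1 : (3/(4*(2*(k:ℝ)+2))) * (((k:ℝ)+1) * cB (k+1)) = 3*cB (k+1)/8 := by
    field_simp; ring
  have t2 : 2*((k:ℝ)*((k:ℝ)+1)*cB (k+1)/12)/(2*(k:ℝ)+2) = (k:ℝ)*cB (k+1)/12 := by
    rw [div_eq_iff h3]; field_simp
  rw [t1, t2]
  linear_combination (-1/6) * cB_rec k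


/-- with `c² = 2`, the WKB coefficient
`S₂(x) = (x³ - 12x)/(48(x² - 2)^{3/2})` has the convergent expansion
`1/48 + (1/2) Σ_{k≥1} G(2k) (2x²)^{-k}` for `x > √2`. -/
theorem stmt19 :
    ∀ x : ℝ, Real.sqrt 2 < x →
      HasSum (fun k : ℕ => (1 / 2) * Gc (2 * (k + 1)) * ((2 * x ^ 2)⁻¹) ^ (k + 1))
        ((x ^ 3 - 12 * x) / (48 * Real.sqrt (x ^ 2 - 2) ^ 3) - 1 / 48) := by
  intro x hx
  have hx0 : 0 < x := lt_of_le_of_lt (Real.sqrt_nonneg 2) hx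
  have hx2 : 2 < x^2 := by
    have h1 : Real.sqrt 2 ^ 2 < x^2 :=
      pow_lt_pow_left₀ hx (Real.sqrt_nonneg 2) (by norm_num)
    rwa [Real.sq_sqrt (by norm_num : (0:ℝ) ≤ 2)] at h1
  set y : ℝ := (2*x^2)⁻¹ with hydef
  have h2x2 : (0:ℝ) < 2*x^2 := by positivity
  have hy0 : 0 < y := by rw [hydef]; positivity
  have hy4 : 4*y < 1 := by
    rw [hydef, show (4:ℝ) * (2*x^2)⁻¹ = 4/(2*x^2) by ring, div_lt_one h2x2]
    linarith
  have hy4' : (0:ℝ) ≤ 4*y := by positivity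
  -- summability
  have hnn : ∀ n : ℕ, 0 ≤ cB n * y^n :=
    fun n => mul_nonneg (cB_pos n).le (pow_nonneg hy0.le n)
  have hb : ∀ n : ℕ, cB n * y^n ≤ (4*y)^n := by
    intro n
    rw [mul_pow]
    exact mul_le_mul_of_nonneg_right (cB_le n) (pow_nonneg hy0.le n)
  have hgeo : Summable (fun n : ℕ => (4*y)^n) := summable_geometric_of_lt_one hy4' hy4
  have hsum1 : Summable (fun n : ℕ => cB n * y^n) := Summable.of_nonneg_of_le hnn hb hgeo
  have hsum3 : Summable (fun n : ℕ => (2*(n:ℝ)+1) * cB n * y^n) := by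
    have hmaj : Summable (fun n : ℕ => 2*((n:ℝ)^1*(4*y)^n) + (4*y)^n) := by
      have h1 : Summable (fun n : ℕ => (n:ℝ)^1*(4*y)^n) :=
        summable_pow_mul_geometric_of_norm_lt_one 1
          (by rw [Real.norm_eq_abs, abs_of_nonneg hy4']; exact hy4)
      exact (h1.mul_left 2).add hgeo
    apply Summable.of_nonneg_of_le _ _ hmaj
    · intro n
      exact mul_nonneg (mul_nonneg (by positivity) (cB_pos n).le) (pow_nonneg hy0.le n)
    · intro n
      calc (2*(n:ℝ)+1) * cB n * y^n = (2*(n:ℝ)+1) * (cB n * y^n) := by ring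
        _ ≤ (2*(n:ℝ)+1) * (4*y)^n := by
            apply mul_le_mul_of_nonneg_left (hb n) (by positivity)
        _ = 2*((n:ℝ)^1*(4*y)^n) + (4*y)^n := by ring
  have hP : HasSum (fun n : ℕ => cB n * y^n) (∑' n, cB n * y^n) := hsum1.hasSum
  have hL : HasSum (fun n : ℕ => (2*(n:ℝ)+1) * cB n * y^n)
      (∑' n : ℕ, (2*(n:ℝ)+1) * cB n * y^n) := hsum3.hasSum
  set P := ∑' n, cB n * y^n with hPdef
  set L := ∑' n : ℕ, (2*(n:ℝ)+1) * cB n * y^n with hLdef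
  -- Cauchy product: P^2 = (1-4y)⁻¹
  have hnorm1 : Summable (fun n : ℕ => ‖cB n * y^n‖) := by
    have e : (fun n : ℕ => ‖cB n * y^n‖) = fun n => cB n * y^n :=
      funext fun n => Real.norm_of_nonneg (hnn n)
    rw [e]; exact hsum1
  have hPsq : P * P = (1 - 4*y)⁻¹ := by
    rw [hPdef, tsum_mul_tsum_eq_tsum_sum_antidiagonal_of_summable_norm hnorm1 hnorm1]
    have e : ∀ n : ℕ, (∑ kl ∈ Finset.HasAntidiagonal.antidiagonal n, cB kl.1 * y^kl.1 * (cB kl.2 * y^kl.2))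
        = (4*y)^n := by
      intro n
      rw [Finset.Nat.sum_antidiagonal_eq_sum_range_succ
        (fun a b => cB a * y^a * (cB b * y^b)) n]
      have e2 : ∀ i ∈ Finset.range (n+1), cB i * y^i * (cB (n-i) * y^(n-i))
          = cB i * cB (n-i) * y^n := by
        intro i hi
        simp only [Finset.mem_range] at hi
        have : y^i * y^(n-i) = y^n := by
          rw [← pow_add]
          congr 1
          omega
        calc cB i * y^i * (cB (n-i) * y^(n-i)) = cB i * cB (n-i) * (y^i * y^(n-i)) := by ring
          _ = cB i * cB (n-i) * y^n := by rw [this]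
      rw [show n.succ = n+1 from rfl] at *
      rw [Finset.sum_congr rfl e2, ← Finset.sum_mul, idA, mul_pow]
    rw [tsum_congr e, tsum_geometric_of_lt_one hy4' hy4]
  -- (1-4y) L = P
  have hg : HasSum (fun n : ℕ => 2*(n:ℝ)*cB n*y^n) (4*y*L) := by
    have h1 : HasSum (fun n : ℕ => 4*y*((2*(n:ℝ)+1) * cB n * y^n)) (4*y*L) := hL.mul_left (4*y)
    have h2 : (fun n : ℕ => 4*y*((2*(n:ℝ)+1) * cB n * y^n))
        = fun n : ℕ => 2*((n:ℝ)+1)*cB (n+1)*y^(n+1) := by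
      funext n
      rw [pow_succ]
      linear_combination ((-2)*y^n*y) * cB_rec n
    rw [h2] at h1
    have h3 : HasSum (fun n : ℕ => 2*(((n:ℕ)+1:ℕ):ℝ)*cB (n+1)*y^(n+1)) (4*y*L) := by
      convert h1 using 2 with n
      push_cast
      ring
    have h4 : HasSum (fun n : ℕ => 2*(n:ℝ)*cB n*y^n)
        (4*y*L + ∑ i ∈ Finset.range 1, 2*(i:ℝ)*cB i*y^i) :=
      (hasSum_nat_add_iff (f := fun n : ℕ => 2*(n:ℝ)*cB n*y^n) 1).mp h3
    simpa using h4
  have hLP : L - 4*y*L = P := by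
    have h5 : HasSum (fun n : ℕ => (2*(n:ℝ)+1) * cB n * y^n - 2*(n:ℝ)*cB n*y^n)
        (L - 4*y*L) := hL.sub hg
    have h6 : (fun n : ℕ => (2*(n:ℝ)+1) * cB n * y^n - 2*(n:ℝ)*cB n*y^n)
        = fun n : ℕ => cB n * y^n := by funext n; ring
    rw [h6] at h5
    exact h5.unique hP
  -- closed forms
  set s := Real.sqrt (x^2-2) with hsdef
  have hs2 : s^2 = x^2-2 := Real.sq_sqrt (by linarith)
  have hs0 : 0 < s := Real.sqrt_pos.mpr (by linarith)
  have h1my : 1 - 4*y = (x^2-2)/x^2 := by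
    rw [hydef]
    field_simp
    ring
  have h1my0 : (0:ℝ) < 1 - 4*y := by linarith
  have hP1 : 1 ≤ P := by
    have := le_hasSum hP 0 (fun i _ => hnn i)
    simpa [cB_zero] using this
  have hPval : P = x/s := by
    have hxs : (0:ℝ) < x/s := by positivity
    have hsq : P^2 = (x/s)^2 := by
      rw [show P^2 = P*P by ring, hPsq, h1my, div_pow, hs2]
      rw [inv_div]
    calc P = Real.sqrt (P^2) := by rw [Real.sqrt_sq (by linarith)]
      _ = Real.sqrt ((x/s)^2) := by rw [hsq]
      _ = x/s := Real.sqrt_sq hxs.le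
  have hLval : L = x^3/s^3 := by
    have h7 : L * (1-4*y) = P := by linear_combination hLP
    have h8 : L = P / (1-4*y) := by
      rw [eq_div_iff (ne_of_gt h1my0)]
      linear_combination hLP
    rw [h8, hPval, h1my, ← hs2]
    field_simp
  -- final assembly
  have hA : HasSum (fun k : ℕ => (2*(k:ℝ)+3) * cB (k+1) * y^(k+1)) (L - 1) := by
    have h9 := (hasSum_nat_add_iff' (f := fun n : ℕ => (2*(n:ℝ)+1) * cB n * y^n) 1).mpr hL
    have h10 : ∑ i ∈ Finset.range 1, (2*(i:ℝ)+1) * cB i * y^i = 1 := by simp [cB_zero]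
    rw [h10] at h9
    convert h9 using 2 with k
    · rfl
    push_cast; ring
  have hB : HasSum (fun k : ℕ => (2*(k:ℝ)+1) * cB k * y^(k+1)) (y*L) := by
    have h11 := hL.mul_left y
    convert h11 using 2 with k
    · rfl
    rw [pow_succ]; ring
  have hC := (hA.mul_left (1/48)).sub (hB.mul_left (1/2))
  have heq : (fun k : ℕ => (1/48)*((2*(k:ℝ)+3) * cB (k+1) * y^(k+1))
        - (1/2)*((2*(k:ℝ)+1) * cB k * y^(k+1)))
      = fun k : ℕ => (1/2) * Gc (2*(k+1)) * y^(k+1) := by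
    funext k
    rw [Gc_eq k]
    ring
  rw [heq] at hC
  have hval : (1/48)*(L-1) - (1/2)*(y*L) = (x^3 - 12*x)/(48*s^3) - 1/48 := by
    rw [hLval, hydef]
    field_simp
    ring
  rw [hval] at hC
  exact hC
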